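/- Let G be a finite simple graph on vertex set [n] and let h, k be integers with 1 ≤ h ≤ k ≤ n/2. Let B be the (n;k,h)-binomial matrix, and let L_h and L_k be the Laplacian matrices of F_h(G) and F_k(G). If w is an eigenvector of L_k with eigenvalue λ and Bᵀw ≠ 0, then Bᵀw is an eigenvector of L_h with eigenvalue λ. -/

import Mathlib

open Finset Matrix
open scoped symmDiff

/-- The `k`-token graph of a graph `G`: vertices are the `k`-subsets of the vertex set,
two subsets `A`, `B` being adjacent iff their symmetric difference is a pair `{a, b}`
with `a ∈ A`, `b ∈ B` and `a` adjacent to `b` in `G`. -/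
def tokenGraph {V : Type*} [DecidableEq V] (G : SimpleGraph V) (k : ℕ) :
    SimpleGraph {s : Finset V // s.card = k} where
  Adj A B := ∃ a b, a ∈ A.1 ∧ b ∈ B.1 ∧ G.Adj a b ∧ A.1 ∆ B.1 = {a, b}
  symm := by
    constructor
    rintro A B ⟨a, b, ha, hb, hab, hd⟩
    exact ⟨b, a, hb, ha, hab.symm, by rw [symmDiff_comm, hd, Finset.pair_comm]⟩
  loopless := by
    constructor
    rintro A ⟨a, b, ha, hb, hab, hd⟩
    rw [symmDiff_self] at hd
    exact Finset.insert_ne_empty a {b} hd.symm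

/-- The Laplacian matrix (over `ℝ`) of a finite simple graph: `L = D - A`. -/
noncomputable def Lap {V : Type*} [Fintype V] [DecidableEq V] (G : SimpleGraph V) :
    Matrix V V ℝ :=
  letI := Classical.decRel G.Adj
  G.lapMatrix ℝ

/-- The `(n;k₂,k₁)`-binomial matrix: rows indexed by the `k₂`-subsets, columns by the
`k₁`-subsets of `Fin n`; entry is `1` iff the column subset is contained in the row subset. -/
def binMatrix2 (n k₂ k₁ : ℕ) :
    Matrix {s : Finset (Fin n) // s.card = k₂} {s : Finset (Fin n) // s.card = k₁} ℝ :=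
  Matrix.of fun A X => if X.1 ⊆ A.1 then 1 else 0

open scoped Classical
section aux
variable {n : ℕ} (G : SimpleGraph (Fin n))

lemma tokenGraph_adj_iff {m : ℕ} (A B : {s : Finset (Fin n) // s.card = m}) :
    (tokenGraph G m).Adj A B ↔
      ∃ a b, a ∈ A.1 ∧ b ∉ A.1 ∧ G.Adj a b ∧ B.1 = insert b (A.1.erase a) := by
  constructor
  · rintro ⟨a, b, ha, hb, hab, hd⟩
    have hne : a ≠ b := G.ne_of_adj hab
    have hmem := fun x => (Finset.ext_iff.mp hd x)
    simp only [Finset.mem_symmDiff, Finset.mem_insert, Finset.mem_singleton] at hmem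
    have hbA : b ∉ A.1 := by have := hmem b; tauto
    have haB : a ∉ B.1 := by have := hmem a; tauto
    refine ⟨a, b, ha, hbA, hab, ?_⟩
    ext x
    have hx := hmem x
    simp only [Finset.mem_insert, Finset.mem_erase]
    by_cases hxa : x = a
    · subst hxa; simp [haB, hne]
    · by_cases hxb : x = b
      · subst hxb; simp [hb]
      · simp only [hxa, hxb, or_self, iff_false] at hx
        constructor
        · intro hB; exact Or.inr ⟨hxa, by tauto⟩
        · rintro (h | ⟨-, hA⟩); · exact absurd h hxb
          tauto
  · rintro ⟨a, b, ha, hb, hab, hB⟩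
    have hne : a ≠ b := G.ne_of_adj hab
    refine ⟨a, b, ha, by simp [hB], hab, ?_⟩
    ext x
    simp only [Finset.mem_symmDiff, hB, Finset.mem_insert, Finset.mem_erase,
      Finset.mem_singleton]
    by_cases hxa : x = a
    · subst hxa; simp [ha, hne, hb]
    · by_cases hxb : x = b
      · subst hxb; simp [hb, Ne.symm hne]
      · simp [hxa, hxb]



lemma card_insert_erase {n m : ℕ} {X : Finset (Fin n)} (hX : X.card = m) {a b : Fin n}
    (ha : a ∈ X) (hb : b ∉ X) : (insert b (X.erase a)).card = m := by
  have h1 : 0 < X.card := Finset.card_pos.mpr ⟨a, ha⟩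
  rw [Finset.card_insert_of_notMem (fun hmem => hb (Finset.mem_of_mem_erase hmem)),
    Finset.card_erase_of_mem ha]
  omega
lemma card_adj_filter {m : ℕ} (X : {s : Finset (Fin n) // s.card = m})
    (P : Finset (Fin n) → Prop) :
    (Finset.univ.filter fun Y : {s : Finset (Fin n) // s.card = m} =>
        (tokenGraph G m).Adj X Y ∧ P Y.1).card =
    ((Finset.univ ×ˢ Finset.univ).filter fun p : Fin n × Fin n =>
        p.1 ∈ X.1 ∧ p.2 ∉ X.1 ∧ G.Adj p.1 p.2 ∧ P (insert p.2 (X.1.erase p.1))).card := by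
  symm
  apply Finset.card_bij (i := fun p hp =>
    (⟨insert p.2 (X.1.erase p.1), card_insert_erase X.2
      (by simp only [Finset.mem_filter] at hp; exact hp.2.1)
      (by simp only [Finset.mem_filter] at hp; exact hp.2.2.1)⟩ :
      {s : Finset (Fin n) // s.card = m}))
  · intro p hp
    simp only [Finset.mem_filter] at hp ⊢
    refine ⟨Finset.mem_univ _, ?_, hp.2.2.2.2⟩
    exact (tokenGraph_adj_iff G X _).mpr ⟨p.1, p.2, hp.2.1, hp.2.2.1, hp.2.2.2.1, rfl⟩
  · intro p hp q hq heq
    simp only [Finset.mem_filter] at hp hq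
    obtain ⟨-, hp1, hp2, hpadj, -⟩ := hp
    obtain ⟨-, hq1, hq2, hqadj, -⟩ := hq
    have heq' : insert p.2 (X.1.erase p.1) = insert q.2 (X.1.erase q.1) :=
      congrArg Subtype.val heq
    have h2 : p.2 = q.2 := by
      have : p.2 ∈ insert q.2 (X.1.erase q.1) := heq' ▸ Finset.mem_insert_self _ _
      rcases Finset.mem_insert.mp this with h | h
      · exact h
      · exact absurd (Finset.mem_of_mem_erase h) hp2
    have h1 : p.1 = q.1 := by
      have hnp : p.1 ∉ insert p.2 (X.1.erase p.1) := by
        simp only [Finset.mem_insert, Finset.mem_erase]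
        rintro (h | ⟨h, -⟩)
        · exact hp2 (h ▸ hp1)
        · exact h rfl
      rw [heq'] at hnp
      simp only [Finset.mem_insert, Finset.mem_erase, not_or, not_and] at hnp
      by_contra hne
      exact (hnp.2 hne) hp1
    exact Prod.ext h1 h2
  · intro Y hY
    simp only [Finset.mem_filter] at hY
    obtain ⟨-, hadj, hP⟩ := hY
    obtain ⟨a, b, ha, hb, hab, hYeq⟩ := (tokenGraph_adj_iff G X Y).mp hadj
    refine ⟨(a, b), ?_, ?_⟩
    · simp only [Finset.mem_filter, Finset.mem_product]
      exact ⟨⟨Finset.mem_univ _, Finset.mem_univ _⟩, ha, hb, hab, hYeq ▸ hP⟩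
    · exact Subtype.ext hYeq.symm

end aux

section cnt
variable {n : ℕ} (G : SimpleGraph (Fin n))

noncomputable def Ecnt (S T : Finset (Fin n)) : ℕ :=
  ((Finset.univ ×ˢ Finset.univ).filter
    (fun p : Fin n × Fin n => p.1 ∈ S ∧ p.2 ∈ T ∧ G.Adj p.1 p.2)).card

lemma Ecnt_comm (S T : Finset (Fin n)) : Ecnt G S T = Ecnt G T S := by
  unfold Ecnt
  apply Finset.card_bij' (i := fun p _ => p.swap) (j := fun p _ => p.swap) <;>
    intro p hp <;>
    simp only [Finset.mem_filter, Finset.mem_product, Finset.mem_univ,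
      true_and, Prod.fst_swap, Prod.snd_swap, Prod.swap_swap] at hp ⊢ <;>
    first
      | rfl
      | exact ⟨hp.2.1, hp.1, G.adj_symm hp.2.2⟩

lemma Ecnt_union_left {S₁ S₂ : Finset (Fin n)} (T : Finset (Fin n)) (hd : Disjoint S₁ S₂) :
    Ecnt G (S₁ ∪ S₂) T = Ecnt G S₁ T + Ecnt G S₂ T := by
  unfold Ecnt
  rw [← Finset.card_union_of_disjoint, ← Finset.filter_or]
  · congr 1
    apply Finset.filter_congr
    intro p _
    simp [Finset.mem_union, or_and_right]
  · rw [Finset.disjoint_filter]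
    intro p _ h1 h2
    exact (Finset.disjoint_left.mp hd h1.1) h2.1

lemma Ecnt_union_right (S : Finset (Fin n)) {T₁ T₂ : Finset (Fin n)} (hd : Disjoint T₁ T₂) :
    Ecnt G S (T₁ ∪ T₂) = Ecnt G S T₁ + Ecnt G S T₂ := by
  rw [Ecnt_comm, Ecnt_union_left G S hd, Ecnt_comm, Ecnt_comm G T₂]

end cnt

section cnt2
variable {n : ℕ} (G : SimpleGraph (Fin n))

noncomputable def cntP1 (X A : Finset (Fin n)) : ℕ :=
  ((Finset.univ ×ˢ Finset.univ).filter fun p : Fin n × Fin n =>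
    p.1 ∈ X ∧ p.2 ∉ X ∧ G.Adj p.1 p.2 ∧ insert p.2 (X.erase p.1) ⊆ A).card

noncomputable def cntP2 (X A : Finset (Fin n)) : ℕ :=
  ((Finset.univ ×ˢ Finset.univ).filter fun p : Fin n × Fin n =>
    p.1 ∈ A ∧ p.2 ∉ A ∧ G.Adj p.1 p.2 ∧ X ⊆ insert p.2 (A.erase p.1)).card

lemma cntP1_true (X : Finset (Fin n)) : cntP1 G X Finset.univ = Ecnt G X Xᶜ := by
  unfold cntP1 Ecnt
  congr 1
  apply Finset.filter_congr
  intro p _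
  simp [Finset.mem_compl, and_assoc]

lemma cntP1_subset {X A : Finset (Fin n)} (hXA : X ⊆ A) :
    cntP1 G X A = Ecnt G X (A \ X) := by
  unfold cntP1 Ecnt
  congr 1
  apply Finset.filter_congr
  intro p _
  simp only [Finset.mem_sdiff]
  constructor
  · rintro ⟨h1, h2, h3, h4⟩
    exact ⟨h1, ⟨h4 (Finset.mem_insert_self _ _), h2⟩, h3⟩
  · rintro ⟨h1, ⟨h2a, h2x⟩, h3⟩
    exact ⟨h1, h2x, h3, Finset.insert_subset h2a ((Finset.erase_subset _ _).trans hXA)⟩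

lemma cntP2_subset {X A : Finset (Fin n)} (hXA : X ⊆ A) :
    cntP2 G X A = Ecnt G (A \ X) Aᶜ := by
  unfold cntP2 Ecnt
  congr 1
  apply Finset.filter_congr
  intro p _
  simp only [Finset.mem_sdiff, Finset.mem_compl]
  constructor
  · rintro ⟨h1, h2, h3, h4⟩
    refine ⟨⟨h1, fun hin => ?_⟩, h2, h3⟩
    rcases Finset.mem_insert.mp (h4 hin) with he | he
    · exact h2 (he ▸ h1)
    · exact (Finset.mem_erase.mp he).1 rfl
  · rintro ⟨⟨h1a, h1x⟩, h2, h3⟩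
    refine ⟨h1a, h2, h3, fun x hx => ?_⟩
    exact Finset.mem_insert_of_mem (Finset.mem_erase.mpr
      ⟨fun he => h1x (he ▸ hx), hXA hx⟩)

lemma ecnt_identity {X A : Finset (Fin n)} (hXA : X ⊆ A) :
    Ecnt G X Xᶜ + Ecnt G (A \ X) Aᶜ = Ecnt G A Aᶜ + Ecnt G X (A \ X) := by
  have e1 : Xᶜ = (A \ X) ∪ Aᶜ := by
    ext y
    simp only [Finset.mem_compl, Finset.mem_sdiff, Finset.mem_union]
    constructor
    · intro hy
      by_cases hA : y ∈ A
      · exact Or.inl ⟨hA, hy⟩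
      · exact Or.inr hA
    · rintro (⟨-, h⟩ | h)
      · exact h
      · exact fun hx => h (hXA hx)
  have d1 : Disjoint (A \ X) Aᶜ := by
    rw [Finset.disjoint_left]
    intro a ha hc
    exact (Finset.mem_compl.mp hc) (Finset.mem_sdiff.mp ha).1
  have d2 : Disjoint X (A \ X) := Finset.disjoint_sdiff
  have h1 : Ecnt G X Xᶜ = Ecnt G X (A \ X) + Ecnt G X Aᶜ := by
    rw [e1, Ecnt_union_right G X d1]
  have h2 : Ecnt G (X ∪ (A \ X)) Aᶜ = Ecnt G X Aᶜ + Ecnt G (A \ X) Aᶜ :=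
    Ecnt_union_left G Aᶜ d2
  rw [Finset.union_sdiff_of_subset hXA] at h2
  omega

lemma cntP1_single {X A : Finset (Fin n)} {x0 : Fin n} (hd : X \ A = {x0}) :
    cntP1 G X A = Ecnt G {x0} (A \ X) := by
  have hx0 : x0 ∈ X ∧ x0 ∉ A := by
    have : x0 ∈ X \ A := hd ▸ Finset.mem_singleton_self x0
    exact Finset.mem_sdiff.mp this
  have hkey : ∀ x ∈ X, x ≠ x0 → x ∈ A := by
    intro x hx hne
    by_contra hA
    exact hne (Finset.mem_singleton.mp (hd ▸ Finset.mem_sdiff.mpr ⟨hx, hA⟩))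
  unfold cntP1 Ecnt
  congr 1
  apply Finset.filter_congr
  intro p _
  simp only [Finset.mem_singleton, Finset.mem_sdiff]
  constructor
  · rintro ⟨h1, h2, h3, h4⟩
    have hp1 : p.1 = x0 := by
      by_contra hne
      exact hx0.2 (h4 (Finset.mem_insert_of_mem
        (Finset.mem_erase.mpr ⟨fun he => hne he.symm, hx0.1⟩)))
    exact ⟨hp1, ⟨h4 (Finset.mem_insert_self _ _), h2⟩, h3⟩
  · rintro ⟨hp1, ⟨h2a, h2x⟩, h3⟩
    subst hp1
    refine ⟨hx0.1, h2x, h3, Finset.insert_subset h2a ?_⟩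
    intro x hx
    obtain ⟨hne, hxX⟩ := Finset.mem_erase.mp hx
    exact hkey x hxX hne

lemma cntP2_single {X A : Finset (Fin n)} {x0 : Fin n} (hd : X \ A = {x0}) :
    cntP2 G X A = Ecnt G (A \ X) {x0} := by
  have hx0 : x0 ∈ X ∧ x0 ∉ A := by
    have : x0 ∈ X \ A := hd ▸ Finset.mem_singleton_self x0
    exact Finset.mem_sdiff.mp this
  have hkey : ∀ x ∈ X, x ≠ x0 → x ∈ A := by
    intro x hx hne
    by_contra hA
    exact hne (Finset.mem_singleton.mp (hd ▸ Finset.mem_sdiff.mpr ⟨hx, hA⟩))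
  unfold cntP2 Ecnt
  congr 1
  apply Finset.filter_congr
  intro p _
  simp only [Finset.mem_singleton, Finset.mem_sdiff]
  constructor
  · rintro ⟨h1, h2, h3, h4⟩
    have hp2 : x0 = p.2 := by
      rcases Finset.mem_insert.mp (h4 hx0.1) with he | he
      · exact he
      · exact absurd (Finset.mem_of_mem_erase he) hx0.2
    have hp1 : p.1 ∉ X := by
      intro hin
      rcases Finset.mem_insert.mp (h4 hin) with he | he
      · exact h2 (he ▸ h1)
      · exact (Finset.mem_erase.mp he).1 rfl
    exact ⟨⟨h1, hp1⟩, hp2.symm, h3⟩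
  · rintro ⟨⟨h1a, h1x⟩, hp2, h3⟩
    refine ⟨h1a, hp2 ▸ hx0.2, h3, fun x hx => ?_⟩
    by_cases hxx : x = x0
    · exact Finset.mem_insert.mpr (Or.inl (hxx.trans hp2.symm))
    · exact Finset.mem_insert_of_mem (Finset.mem_erase.mpr
        ⟨fun he => h1x (he ▸ hx), hkey x hx hxx⟩)

lemma cntP1_big {X A : Finset (Fin n)} (h2 : 2 ≤ (X \ A).card) : cntP1 G X A = 0 := by
  unfold cntP1
  rw [Finset.card_eq_zero, Finset.filter_eq_empty_iff]
  rintro p - ⟨h1, hp2, h3, h4⟩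
  have hsub : X \ A ⊆ {p.1} := by
    intro x hx
    obtain ⟨hxX, hxA⟩ := Finset.mem_sdiff.mp hx
    by_contra hne
    rw [Finset.mem_singleton] at hne
    exact hxA (h4 (Finset.mem_insert_of_mem (Finset.mem_erase.mpr ⟨hne, hxX⟩)))
  have := Finset.card_le_card hsub
  simp only [Finset.card_singleton] at this
  omega

lemma cntP2_big {X A : Finset (Fin n)} (h2 : 2 ≤ (X \ A).card) : cntP2 G X A = 0 := by
  unfold cntP2
  rw [Finset.card_eq_zero, Finset.filter_eq_empty_iff]
  rintro p - ⟨h1, hp2, h3, h4⟩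
  have hsub : X \ A ⊆ {p.2} := by
    intro x hx
    obtain ⟨hxX, hxA⟩ := Finset.mem_sdiff.mp hx
    rcases Finset.mem_insert.mp (h4 hxX) with he | he
    · exact Finset.mem_singleton.mpr he
    · exact absurd (Finset.mem_of_mem_erase he) hxA
  have := Finset.card_le_card hsub
  simp only [Finset.card_singleton] at this
  omega

lemma cnt_eq_of_not_subset {X A : Finset (Fin n)} (hXA : ¬ X ⊆ A) :
    cntP1 G X A = cntP2 G X A := by
  have hne : (X \ A).Nonempty := by rwa [Finset.sdiff_nonempty]
  by_cases hc : (X \ A).card = 1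
  · obtain ⟨x0, hx0⟩ := Finset.card_eq_one.mp hc
    rw [cntP1_single G hx0, cntP2_single G hx0, Ecnt_comm]
  · have hge : 2 ≤ (X \ A).card := by
      have := Finset.card_pos.mpr hne
      omega
    rw [cntP1_big G hge, cntP2_big G hge]

lemma cnt_main_of_subset {X A : Finset (Fin n)} (hXA : X ⊆ A) :
    Ecnt G X Xᶜ + cntP2 G X A = Ecnt G A Aᶜ + cntP1 G X A := by
  rw [cntP1_subset G hXA, cntP2_subset G hXA]
  exact ecnt_identity G hXA

end cnt2

lemma Lap_apply {V : Type*} [Fintype V] [DecidableEq V] (G' : SimpleGraph V) (u v : V) :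
    Lap G' u v = (if u = v then (G'.degree u : ℝ) else 0) - (if G'.Adj u v then 1 else 0) := by
  simp only [Lap, SimpleGraph.lapMatrix, SimpleGraph.degMatrix, Matrix.sub_apply,
    Matrix.diagonal_apply, SimpleGraph.adjMatrix_apply]

lemma card_filter_congr {α : Type*} {s : Finset α} {p q : α → Prop}
    {hp : DecidablePred p} {hq : DecidablePred q} (H : ∀ x ∈ s, p x ↔ q x) :
    (@Finset.filter α p hp s).card = (@Finset.filter α q hq s).card :=
  congrArg Finset.card (@Finset.filter_congr α p q hp hq s H)

lemma degree_tokenGraph {n m : ℕ} (G : SimpleGraph (Fin n))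
    (X : {s : Finset (Fin n) // s.card = m}) :
    (tokenGraph G m).degree X = Ecnt G X.1 X.1ᶜ := by
  have hmain := card_adj_filter G X (fun _ : Finset (Fin n) => True)
  refine Eq.trans ?_ (hmain.trans ?_)
  · rw [SimpleGraph.degree, SimpleGraph.neighborFinset_eq_filter]
    refine card_filter_congr fun Y _ => ?_
    simp
  · unfold Ecnt
    refine card_filter_congr fun p _ => ?_
    simp [Finset.mem_compl]

lemma lap_comm {n : ℕ} (G : SimpleGraph (Fin n)) (h k : ℕ) :
    Lap (tokenGraph G h) * (binMatrix2 n k h)ᵀ = (binMatrix2 n k h)ᵀ * Lap (tokenGraph G k) := by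
  ext X A
  rw [Matrix.mul_apply, Matrix.mul_apply]
  have hB : ∀ (A : {s : Finset (Fin n) // s.card = k}) (Y : {s : Finset (Fin n) // s.card = h}),
      (binMatrix2 n k h)ᵀ Y A = if Y.1 ⊆ A.1 then (1:ℝ) else 0 := fun _ _ => rfl
  have hL : ∑ Y, Lap (tokenGraph G h) X Y * (binMatrix2 n k h)ᵀ Y A
      = ((tokenGraph G h).degree X : ℝ) * (if X.1 ⊆ A.1 then 1 else 0)
        - (cntP1 G X.1 A.1 : ℝ) := by
    simp only [hB, Lap_apply, sub_mul, ite_mul, zero_mul, one_mul, ← ite_and]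
    rw [Finset.sum_sub_distrib]
    congr 1
    · rw [Finset.sum_ite_eq]
      simp
    · rw [Finset.sum_boole]
      congr 1
      refine Eq.trans ?_ ((card_adj_filter G X (fun s => s ⊆ A.1)).trans ?_)
      · exact card_filter_congr fun Y _ => Iff.rfl
      · unfold cntP1
        exact card_filter_congr fun p _ => Iff.rfl
  have hR : ∑ B, (binMatrix2 n k h)ᵀ X B * Lap (tokenGraph G k) B A
      = (if X.1 ⊆ A.1 then 1 else 0) * ((tokenGraph G k).degree A : ℝ)
        - (cntP2 G X.1 A.1 : ℝ) := by
    simp only [hB, Lap_apply, mul_sub, mul_ite, mul_zero, mul_one, ← ite_and]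
    rw [Finset.sum_sub_distrib]
    congr 1
    · rw [Finset.sum_ite_eq']
      simp
    · rw [Finset.sum_boole]
      congr 1
      refine Eq.trans ?_ ((card_adj_filter G A (fun s => X.1 ⊆ s)).trans ?_)
      · refine card_filter_congr fun B _ => ?_
        rw [SimpleGraph.adj_comm, and_comm]
      · unfold cntP2
        exact card_filter_congr fun p _ => Iff.rfl
  rw [hL, hR, degree_tokenGraph, degree_tokenGraph]
  by_cases hs : X.1 ⊆ A.1
  · simp only [hs, if_true, mul_one, one_mul]
    have hnat := cnt_main_of_subset G hs
    have hcast := congrArg (Nat.cast : ℕ → ℝ) hnat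
    push_cast at hcast
    linarith
  · simp only [hs, if_false, mul_zero, zero_mul, zero_sub]
    rw [cnt_eq_of_not_subset G hs]

/-- For `1 ≤ h ≤ k ≤ n/2` and `B` the `(n;k,h)`-binomial matrix:
if `w` is an eigenvector of `L_k` with eigenvalue `λ` and `Bᵀ w ≠ 0`, then `Bᵀ w` is an
eigenvector of `L_h` with eigenvalue `λ`. -/
theorem binMatrix2_transpose_eigenvector (n h k : ℕ)
    (hh : 1 ≤ h) (hhk : h ≤ k) (hkn : 2 * k ≤ n) (G : SimpleGraph (Fin n)) (lam : ℝ)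
    (w : {s : Finset (Fin n) // s.card = k} → ℝ) (hw : w ≠ 0)
    (hev : Lap (tokenGraph G k) *ᵥ w = lam • w)
    (hBw : (binMatrix2 n k h)ᵀ *ᵥ w ≠ 0) :
    Lap (tokenGraph G h) *ᵥ ((binMatrix2 n k h)ᵀ *ᵥ w) =
      lam • ((binMatrix2 n k h)ᵀ *ᵥ w) := by
  rw [Matrix.mulVec_mulVec, lap_comm G h k, ← Matrix.mulVec_mulVec, hev,
    Matrix.mulVec_smul]
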